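/- arXiv:1910.01868 — 3 statements merged into one kernel-verified Lean document; each statement's English description precedes it below -/
import Mathlib

section
/- Let F be a quadratically closed field (a field with no quadratic field extension) and let r ≥ 1. Then every system of r quadratic forms on an F-vector space of dimension strictly greater than r(r+1)/2 is isotropic. -/
universe u

/-- A field `F` is *quadratically closed* if it has no quadratic field extension. -/
def QuadraticallyClosed (F : Type u) [Field F] : Prop :=
  ∀ (K : Type u) (_ : Field K) (_ : Algebra F K), Module.finrank F K ≠ 2

namespace QCAux

open MvPolynomial Finset

variable {F : Type u} [Field F]

/-- Every quadratic with nonzero leading coefficient has a root. -/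
lemma exists_root (hF : QuadraticallyClosed F) (a b c : F) (ha : a ≠ 0) :
    ∃ t : F, a * t ^ 2 + b * t + c = 0 := by
  set p : Polynomial F :=
    Polynomial.C a * Polynomial.X ^ 2 + Polynomial.C b * Polynomial.X + Polynomial.C c with hp
  have hdeg : p.natDegree = 2 := Polynomial.natDegree_quadratic ha
  have hp0 : p ≠ 0 := fun h => by simp [h] at hdeg
  by_cases hroots : p.roots = 0
  · exfalso
    have hirr : Irreducible p :=
      (Polynomial.irreducible_iff_roots_eq_zero_of_degree_le_three (by omega) (by omega)).mpr
        hroots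
    haveI : Fact (Irreducible p) := ⟨hirr⟩
    refine hF (AdjoinRoot p) inferInstance inferInstance ?_
    rw [(AdjoinRoot.powerBasis hp0).finrank, AdjoinRoot.powerBasis_dim, hdeg]
  · obtain ⟨t, ht⟩ := Multiset.exists_mem_of_ne_zero hroots
    refine ⟨t, ?_⟩
    have h2 := (Polynomial.mem_roots hp0).mp ht
    simpa [hp, Polynomial.IsRoot] using h2

/-- Classification of exponent vectors of degree two. -/
lemma degree_two_classify {σ : Type*} (d : σ →₀ ℕ) (hd : Finsupp.degree d = 2) :
    ∃ i j, d = Finsupp.single i 1 + Finsupp.single j 1 := by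
  classical
  have hne : d.support.Nonempty := by
    rcases Finset.eq_empty_or_nonempty d.support with h | h
    · exfalso; rw [Finsupp.degree_apply, h] at hd; simp at hd
    · exact h
  obtain ⟨i, hi⟩ := hne
  have hdi : 0 < d i := Nat.pos_of_ne_zero (Finsupp.mem_support_iff.mp hi)
  have hsplit : d i + ∑ k ∈ d.support.erase i, d k = 2 := by
    rw [Finset.add_sum_erase _ _ hi]; exact hd
  have hle : d i ≤ 2 := by omega
  rcases (by omega : d i = 2 ∨ d i = 1) with h2 | h1
  · -- d = single i 2
    have hrest : ∑ k ∈ d.support.erase i, d k = 0 := by omega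
    have hz : ∀ k ∈ d.support.erase i, d k = 0 := Finset.sum_eq_zero_iff.mp hrest
    have hsub : d.support ⊆ {i} := by
      intro k hk
      by_contra hki
      have : k ∈ d.support.erase i := Finset.mem_erase.mpr ⟨by simpa using hki, hk⟩
      exact Finsupp.mem_support_iff.mp hk (hz k this)
    refine ⟨i, i, ?_⟩
    rw [Finsupp.support_subset_singleton.mp hsub, h2, ← Finsupp.single_add]
  · have hrest : ∑ k ∈ d.support.erase i, d k = 1 := by omega
    obtain ⟨j, hj, hj0⟩ := Finset.exists_ne_zero_of_sum_ne_zero (by omega :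
      ∑ k ∈ d.support.erase i, d k ≠ 0)
    have hji : j ≠ i := (Finset.mem_erase.mp hj).1
    have hdj : d j = 1 := by
      have := Finset.single_le_sum (f := (d : σ → ℕ)) (fun k _ => Nat.zero_le _) hj
      omega
    have hrest2 : ∑ k ∈ (d.support.erase i).erase j, d k = 0 := by
      have := Finset.add_sum_erase _ (d : σ → ℕ) hj
      omega
    have hz : ∀ k ∈ (d.support.erase i).erase j, d k = 0 := Finset.sum_eq_zero_iff.mp hrest2
    refine ⟨i, j, ?_⟩
    ext k
    rcases eq_or_ne k i with rfl | hki
    · simp [Finsupp.single_apply, h1, hji]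
    · rcases eq_or_ne k j with rfl | hkj
      · simp [Finsupp.single_apply, hdj, Ne.symm hki]
      · have hk0 : d k = 0 := by
          by_cases hk : k ∈ d.support
          · exact hz k (Finset.mem_erase.mpr ⟨hkj, Finset.mem_erase.mpr ⟨hki, hk⟩⟩)
          · simpa using Finsupp.notMem_support_iff.mp hk
        simp [Finsupp.single_apply, hk0, Ne.symm hki, Ne.symm hkj]

lemma single_pair_eq_iff {σ : Type*} {i j i0 j0 : σ} :
    Finsupp.single i0 1 + Finsupp.single j0 1
      = Finsupp.single i 1 + Finsupp.single j 1 ↔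
      (i0 = i ∧ j0 = j) ∨ (i0 = j ∧ j0 = i) := by
  classical
  constructor
  · intro h
    have hi := DFunLike.congr_fun h i0
    simp only [Finsupp.add_apply, Finsupp.single_apply, eq_self_iff_true, if_true] at hi
    have hcase : i = i0 ∨ j = i0 := by
      by_contra hcon
      push_neg at hcon
      rw [if_neg hcon.1, if_neg hcon.2] at hi
      split at hi <;> omega
    rcases hcase with h5 | h5
    · left
      refine ⟨h5.symm, ?_⟩
      rw [← h5] at h
      have hc := add_left_cancel h
      rcases (Finsupp.single_eq_single_iff _ _ _ _).mp hc with ⟨h1, _⟩ | ⟨h1, _⟩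
      · exact h1
      · exact absurd h1 one_ne_zero
    · right
      refine ⟨h5.symm, ?_⟩
      rw [← h5] at h
      rw [add_comm (Finsupp.single j 1)] at h
      have hc := add_right_cancel h
      rcases (Finsupp.single_eq_single_iff _ _ _ _).mp hc with ⟨h1, _⟩ | ⟨h1, _⟩
      · exact h1
      · exact absurd h1 one_ne_zero
  · rintro (⟨rfl, rfl⟩ | ⟨rfl, rfl⟩)
    · rfl
    · exact add_comm _ _

lemma eval_monomial_pair {σ : Type*} (z : σ → F) (i0 j0 : σ) (c : F) :
    eval z (monomial (Finsupp.single i0 1 + Finsupp.single j0 1) c) = c * (z i0 * z j0) := by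
  classical
  rw [eval_monomial]
  congr 1
  rw [Finsupp.prod_add_index' (fun a => pow_zero (z a)) (fun a b₁ b₂ => pow_add (z a) b₁ b₂)]
  simp [Finsupp.prod_single_index]

variable {n : ℕ}

/-- Coefficients of the polar form of a quadratic polynomial. -/
noncomputable def pc (φ : MvPolynomial (Fin n) F) (i j : Fin n) : F :=
  (if i = j then 2 else 1) * MvPolynomial.coeff (Finsupp.single i 1 + Finsupp.single j 1) φ

/-- Polar form. -/
noncomputable def polB (φ : MvPolynomial (Fin n) F) (x y : Fin n → F) : F :=
  ∑ i, ∑ j, pc φ i j * x i * y j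

lemma polB_smul_left (φ : MvPolynomial (Fin n) F) (t : F) (x y : Fin n → F) :
    polB φ (t • x) y = t * polB φ x y := by
  simp only [polB, Finset.mul_sum]
  refine Finset.sum_congr rfl fun i _ => Finset.sum_congr rfl fun j _ => ?_
  simp only [Pi.smul_apply, smul_eq_mul]
  ring

lemma polB_eq_dot (φ : MvPolynomial (Fin n) F) (x y : Fin n → F) :
    polB φ x y = ∑ j, (∑ i, pc φ i j * x i) * y j := by
  rw [polB, Finset.sum_comm]
  exact Finset.sum_congr rfl fun j _ => by rw [Finset.sum_mul]

lemma polB_add (p q : MvPolynomial (Fin n) F) (x y : Fin n → F) :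
    polB (p + q) x y = polB p x y + polB q x y := by
  simp only [polB, pc, MvPolynomial.coeff_add, mul_add, add_mul, Finset.sum_add_distrib]

lemma polB_zero (x y : Fin n → F) : polB (0 : MvPolynomial (Fin n) F) x y = 0 := by
  simp [polB, pc]

lemma polB_sum {ι : Type*} (s : Finset ι) (f : ι → MvPolynomial (Fin n) F) (x y : Fin n → F) :
    polB (∑ k ∈ s, f k) x y = ∑ k ∈ s, polB (f k) x y := by
  classical
  induction s using Finset.induction with
  | empty => simp [polB_zero]
  | insert _ _ h ih => rw [Finset.sum_insert h, Finset.sum_insert h, polB_add, ih]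

lemma polB_monomial (i0 j0 : Fin n) (c : F) (x y : Fin n → F) :
    polB (monomial (Finsupp.single i0 1 + Finsupp.single j0 1) c) x y
      = if i0 = j0 then 2 * c * (x i0 * y i0) else c * (x i0 * y j0) + c * (x j0 * y i0) := by
  classical
  have hcoeff : ∀ i j : Fin n,
      pc (monomial (Finsupp.single i0 1 + Finsupp.single j0 1) c) i j
        = (if i = j then 2 else 1) * (if (i0 = i ∧ j0 = j) ∨ (i0 = j ∧ j0 = i) then c else 0) := by
    intro i j
    rw [pc, coeff_monomial, if_congr single_pair_eq_iff rfl rfl]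
  by_cases hij : i0 = j0
  · subst hij
    rw [if_pos rfl, polB]
    calc ∑ i, ∑ j, pc (monomial (Finsupp.single i0 1 + Finsupp.single i0 1) c) i j * x i * y j
        = ∑ i, ∑ j, (if j = i0 then if i = i0 then 2 * c * (x i * y j) else 0 else 0) := by
          refine Finset.sum_congr rfl fun i _ => Finset.sum_congr rfl fun j _ => ?_
          rw [hcoeff]
          by_cases h1 : i = i0 <;> by_cases h2 : j = i0
          · rw [if_pos h2, if_pos h1, if_pos (Or.inl ⟨h1.symm, h2.symm⟩),
              if_pos (h1.trans h2.symm)]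
            ring
          · rw [if_neg h2,
              if_neg (show ¬(i0 = i ∧ i0 = j ∨ i0 = j ∧ i0 = i) from fun hh => hh.elim (fun a => h2 a.2.symm) (fun a => h2 a.1.symm))]
            ring
          · rw [if_pos h2, if_neg h1,
              if_neg (show ¬(i0 = i ∧ i0 = j ∨ i0 = j ∧ i0 = i) from fun hh => hh.elim (fun a => h1 a.1.symm) (fun a => h1 a.2.symm))]
            ring
          · rw [if_neg h2,
              if_neg (show ¬(i0 = i ∧ i0 = j ∨ i0 = j ∧ i0 = i) from fun hh => hh.elim (fun a => h1 a.1.symm) (fun a => h1 a.2.symm))]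
            ring
      _ = 2 * c * (x i0 * y i0) := by simp [Finset.sum_ite_eq']
  · rw [if_neg hij, polB]
    calc ∑ i, ∑ j, pc (monomial (Finsupp.single i0 1 + Finsupp.single j0 1) c) i j * x i * y j
        = ∑ i, ∑ j, ((if j = j0 then if i = i0 then c * (x i * y j) else 0 else 0)
            + (if j = i0 then if i = j0 then c * (x i * y j) else 0 else 0)) := by
          refine Finset.sum_congr rfl fun i _ => Finset.sum_congr rfl fun j _ => ?_
          rw [hcoeff]
          by_cases hP : (i0 = i ∧ j0 = j) ∨ (i0 = j ∧ j0 = i)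
          · rcases hP with ⟨h5, h6⟩ | ⟨h5, h6⟩
            · rw [if_pos (Or.inl ⟨h5, h6⟩),
                if_neg (show ¬(i = j) from fun h => hij (h5.trans (h.trans h6.symm))),
                if_pos h6.symm, if_pos h5.symm,
                if_neg (show ¬(j = i0) from fun h => hij (h.symm.trans h6.symm))]
              ring
            · rw [if_pos (Or.inr ⟨h5, h6⟩),
                if_neg (show ¬(i = j) from fun h => hij (h5.trans (h.symm.trans h6.symm))),
                if_neg (show ¬(j = j0) from fun h => hij (h5.trans h)),
                if_pos h5.symm, if_pos h6.symm]
              ring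
          · have hA : ¬(j = j0 ∧ i = i0) := fun hh => hP (Or.inl ⟨hh.2.symm, hh.1.symm⟩)
            have hB : ¬(j = i0 ∧ i = j0) := fun hh => hP (Or.inr ⟨hh.1.symm, hh.2.symm⟩)
            rw [if_neg hP]
            by_cases h2 : j = j0
            · rw [if_pos h2, if_neg fun hi => hA ⟨h2, hi⟩]
              by_cases h4 : j = i0
              · rw [if_pos h4, if_neg fun hi => hB ⟨h4, hi⟩]
                ring
              · rw [if_neg h4]
                ring
            · rw [if_neg h2]
              by_cases h4 : j = i0
              · rw [if_pos h4, if_neg fun hi => hB ⟨h4, hi⟩]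
                ring
              · rw [if_neg h4]
                ring
      _ = c * (x i0 * y j0) + c * (x j0 * y i0) := by
          simp [Finset.sum_add_distrib, Finset.sum_ite_eq']

lemma eval_add_expand {φ : MvPolynomial (Fin n) F} (hφ : φ.IsHomogeneous 2) (x y : Fin n → F) :
    eval (x + y) φ = eval x φ + eval y φ + polB φ x y := by
  classical
  have key : ∀ (d : Fin n →₀ ℕ) (c : F), Finsupp.degree d = 2 →
      eval (x + y) (monomial d c)
        = eval x (monomial d c) + eval y (monomial d c) + polB (monomial d c) x y := by
    intro d c hd
    obtain ⟨i0, j0, rfl⟩ := degree_two_classify d hd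
    rw [eval_monomial_pair, eval_monomial_pair, eval_monomial_pair, polB_monomial]
    by_cases hij : i0 = j0
    · subst hij
      rw [if_pos rfl]
      simp only [Pi.add_apply]
      ring
    · rw [if_neg hij]
      simp only [Pi.add_apply]
      ring
  have hrep : φ = ∑ d ∈ φ.support, monomial d (coeff d φ) :=
    (support_sum_monomial_coeff φ).symm
  have h1 : eval (x + y) φ = ∑ d ∈ φ.support, eval (x + y) (monomial d (coeff d φ)) := by
    conv_lhs => rw [hrep]
    exact map_sum _ _ _
  have h2 : eval x φ = ∑ d ∈ φ.support, eval x (monomial d (coeff d φ)) := by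
    conv_lhs => rw [hrep]
    exact map_sum _ _ _
  have h3 : eval y φ = ∑ d ∈ φ.support, eval y (monomial d (coeff d φ)) := by
    conv_lhs => rw [hrep]
    exact map_sum _ _ _
  have h4 : polB φ x y = ∑ d ∈ φ.support, polB (monomial d (coeff d φ)) x y := by
    conv_lhs => rw [hrep]
    exact polB_sum _ _ _ _
  rw [h1, h2, h3, h4, ← Finset.sum_add_distrib, ← Finset.sum_add_distrib]
  refine Finset.sum_congr rfl fun d hd => key d _ ?_
  rw [Finsupp.degree_eq_weight_one]
  exact hφ (MvPolynomial.mem_support_iff.mp hd)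

lemma eval_smul_of_homog {φ : MvPolynomial (Fin n) F} {m : ℕ} (hφ : φ.IsHomogeneous m)
    (t : F) (x : Fin n → F) :
    eval (t • x) φ = t ^ m * eval x φ := by
  classical
  rw [eval_eq', eval_eq', Finset.mul_sum]
  refine Finset.sum_congr rfl fun d hd => ?_
  have hdeg : ∑ i, d i = m := by
    have h1 : Finsupp.degree d = m := by
      rw [Finsupp.degree_eq_weight_one]
      exact hφ (MvPolynomial.mem_support_iff.mp hd)
    rw [← h1, Finsupp.degree_apply]
    exact (Finset.sum_subset (Finset.subset_univ _) fun i _ hi => by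
      simpa using Finsupp.notMem_support_iff.mp hi).symm
  calc coeff d φ * ∏ i, (t • x) i ^ d i
      = coeff d φ * ∏ i, (t ^ d i * x i ^ d i) := by
        simp [mul_pow]
    _ = t ^ m * (coeff d φ * ∏ i, x i ^ d i) := by
        rw [Finset.prod_mul_distrib, Finset.prod_pow_eq_pow_sum, hdeg]
        ring

lemma eval_smul_add {φ : MvPolynomial (Fin n) F} (hφ : φ.IsHomogeneous 2)
    (t : F) (v w : Fin n → F) :
    eval (t • v + w) φ = t ^ 2 * eval v φ + t * polB φ v w + eval w φ := by
  rw [eval_add_expand hφ (t • v) w, eval_smul_of_homog hφ, polB_smul_left]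
  ring

/-- Restricting a system to a subspace. -/
lemma aux_restrict {r : ℕ} (U : Submodule F (Fin n → F))
    (φ : Fin r → MvPolynomial (Fin n) F) (hφ : ∀ i, (φ i).IsHomogeneous 2)
    (IH : ∀ φ' : Fin r → MvPolynomial (Fin (Module.finrank F U)) F,
      (∀ i, (φ' i).IsHomogeneous 2) →
      ∃ u : Fin (Module.finrank F U) → F, u ≠ 0 ∧ ∀ i, eval u (φ' i) = 0) :
    ∃ w : Fin n → F, w ∈ U ∧ w ≠ 0 ∧ ∀ i, eval w (φ i) = 0 := by
  classical
  set m := Module.finrank F U with hm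
  let b : Module.Basis (Fin m) F U := Module.finBasis F U
  let g : Fin n → MvPolynomial (Fin m) F :=
    fun i => ∑ j, MvPolynomial.C ((b j : Fin n → F) i) * MvPolynomial.X j
  have hg : ∀ i, (g i).IsHomogeneous 1 :=
    fun i => IsHomogeneous.sum _ _ _ fun j _ => isHomogeneous_C_mul_X _ _
  obtain ⟨u, hu0, hu⟩ := IH (fun k => MvPolynomial.aeval g (φ k))
    (fun k => by simpa using (hφ k).aeval g hg)
  let wU : U := ∑ j, u j • b j
  have hwcoord : ∀ i, (wU : Fin n → F) i = ∑ j, (b j : Fin n → F) i * u j := by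
    intro i
    simp only [wU, Submodule.coe_sum, Submodule.coe_smul, Finset.sum_apply, Pi.smul_apply,
      smul_eq_mul]
    exact Finset.sum_congr rfl fun j _ => mul_comm _ _
  refine ⟨(wU : Fin n → F), wU.2, ?_, ?_⟩
  · intro h
    have hz : wU = 0 := Subtype.ext h
    refine hu0 (funext fun j => ?_)
    exact Fintype.linearIndependent_iff.mp b.linearIndependent u hz j
  · intro k
    have hcomp : ∀ p : MvPolynomial (Fin n) F,
        eval u (MvPolynomial.aeval g p) = eval (fun i => eval u (g i)) p := by
      intro p
      induction p using MvPolynomial.induction_on with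
      | C a => simp
      | add p q hp hq => simp only [map_add, hp, hq]
      | mul_X p i hp => simp only [map_mul, aeval_X, eval_X, hp]
    have hgi : (fun i => eval u (g i)) = (wU : Fin n → F) := by
      funext i
      rw [hwcoord i]
      simp [g]
    have := hu k
    rw [hcomp, hgi] at this
    exact this

/-- Main induction. -/
theorem key_induction (hF : QuadraticallyClosed F) (r : ℕ) :
    ∀ (N : ℕ), (r + 1) * (r + 2) / 2 < N →
      ∀ φ : Fin (r + 1) → MvPolynomial (Fin N) F, (∀ i, (φ i).IsHomogeneous 2) →
      ∃ v : Fin N → F, v ≠ 0 ∧ ∀ i, eval v (φ i) = 0 := by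
  induction r with
  | zero =>
    intro N hn φ hφ
    have h2 : 2 ≤ N := by norm_num at hn; omega
    set i0 : Fin N := ⟨0, by omega⟩
    set i1 : Fin N := ⟨1, by omega⟩
    have hne : i0 ≠ i1 := by simp [i0, i1, Fin.ext_iff]
    set e0 : Fin N → F := Pi.single i0 1 with he0
    set e1 : Fin N → F := Pi.single i1 1 with he1
    by_cases ha : eval e0 (φ 0) = 0
    · refine ⟨e0, ?_, ?_⟩
      · intro h
        have := congrFun h i0
        simp [he0, Pi.single_eq_same] at this
      · intro i
        rw [Fin.eq_zero i]
        exact ha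
    · obtain ⟨t, ht⟩ := exists_root hF _ (polB (φ 0) e0 e1) (eval e1 (φ 0)) ha
      refine ⟨t • e0 + e1, ?_, ?_⟩
      · intro h
        have := congrFun h i1
        simp [he0, he1, Pi.single_eq_same, Pi.single_eq_of_ne (Ne.symm hne)] at this
      · intro i
        rw [Fin.eq_zero i, eval_smul_add (hφ 0)]
        linear_combination ht
  | succ r ih =>
    intro N hn φ hφ
    have hb : (r + 1) * (r + 2) / 2 + (r + 2) = (r + 2) * (r + 3) / 2 := by
      have h : (r + 2) * (r + 3) = (r + 1) * (r + 2) + 2 * (r + 2) := by ring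
      rw [h, Nat.add_mul_div_left _ _ (by norm_num)]
    have he : (r + 1 + 1) * (r + 1 + 2) = (r + 2) * (r + 3) := by ring
    rw [he] at hn
    obtain ⟨v, hv0, hv⟩ := ih N (by omega) (fun i => φ i.castSucc) (fun i => hφ _)
    by_cases hc : eval v (φ (Fin.last (r + 1))) = 0
    · exact ⟨v, hv0, fun i => Fin.lastCases hc hv i⟩
    · obtain ⟨i0, hi0⟩ := Function.ne_iff.mp hv0
      let M : Matrix (Fin (r + 2)) (Fin N) F :=
        Fin.lastCases (fun j => if j = i0 then 1 else 0)
          (fun k j => ∑ i, pc (φ k.castSucc) i j * v i)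
      set U := LinearMap.ker M.mulVecLin with hU
      have hrank : (r + 1) * (r + 2) / 2 < Module.finrank F U := by
        have h1 := M.mulVecLin.finrank_range_add_finrank_ker
        have h2 : Module.finrank F (LinearMap.range M.mulVecLin) ≤ r + 2 := by
          refine le_trans (Submodule.finrank_le _) ?_
          rw [Module.finrank_fin_fun]
        rw [Module.finrank_fin_fun] at h1
        rw [← hU] at h1
        omega
      obtain ⟨w, hwU, hw0, hwz⟩ := aux_restrict U (fun k => φ k.castSucc) (fun k => hφ _)
        (fun φ' hφ' => ih _ hrank φ' hφ')
      have hker : M.mulVec w = 0 := by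
        rw [← M.mulVecLin_apply]
        exact hwU
      have hwi0 : w i0 = 0 := by
        have h5 := congrFun hker (Fin.last (r + 1))
        simp only [M, Matrix.mulVec, dotProduct, Fin.lastCases_last, Pi.zero_apply] at h5
        rw [← h5]
        rw [Finset.sum_eq_single i0]
        · simp
        · intro j _ hj
          simp [hj]
        · simp
      have hpol : ∀ k : Fin (r + 1), polB (φ k.castSucc) v w = 0 := by
        intro k
        have h5 := congrFun hker k.castSucc
        simp only [M, Matrix.mulVec, dotProduct, Fin.lastCases_castSucc, Pi.zero_apply] at h5
        rw [polB_eq_dot]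
        exact h5
      obtain ⟨t, ht⟩ := exists_root hF _ (polB (φ (Fin.last (r + 1))) v w)
        (eval w (φ (Fin.last (r + 1)))) hc
      refine ⟨t • v + w, ?_, ?_⟩
      · intro h
        have h6 : t * v i0 = 0 := by
          have := congrFun h i0
          simpa [hwi0] using this
        have ht0 : t = 0 := by
          rcases mul_eq_zero.mp h6 with h7 | h7
          · exact h7
          · exact absurd h7 hi0
        rw [ht0, zero_smul, zero_add] at h
        exact hw0 h
      · intro i
        refine Fin.lastCases ?_ ?_ i
        · rw [eval_smul_add (hφ _)]
          linear_combination ht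
        · intro k
          rw [eval_smul_add (hφ _), hv k, hpol k, hwz k]
          ring

end QCAux

/-- **Corollary.** If `F` is quadratically closed, then any system of `r` quadratic forms
(homogeneous polynomials of degree 2) in strictly more than `r(r+1)/2` variables over `F`
is isotropic. -/
theorem system_of_quadratic_forms_isotropic_of_quadratically_closed
    (F : Type u) [Field F] (hF : QuadraticallyClosed F)
    (r n : ℕ) (hr : 1 ≤ r) (hn : r * (r + 1) / 2 < n)
    (φ : Fin r → MvPolynomial (Fin n) F)
    (hφ : ∀ i, (φ i).IsHomogeneous 2) :
    ∃ v : Fin n → F, v ≠ 0 ∧ ∀ i, MvPolynomial.eval v (φ i) = 0 := by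
  obtain ⟨r', rfl⟩ : ∃ r', r = r' + 1 := ⟨r - 1, by omega⟩
  refine QCAux.key_induction hF r' n ?_ φ hφ
  have h : r' + 1 + 1 = r' + 2 := by omega
  rw [h] at hn
  exact hn
end

section
/- Let p be a prime number and F a field with char F = p. Let K/F be an algebraic field extension, let α ∈ K be nonzero, and let r ∈ ℕ be minimal such that α^{p^r} is separable over F. Then there exists a purely inseparable field extension L/F with L^{p^{r+1}} ⊆ F and [L:F] ≤ p^{[F(α^{p^r}):F]·(r+1)} such that α is a p-th power in the field L(α). -/
universe u v

open IntermediateField Polynomial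

theorem aux_finrank {F Ω : Type*} [Field F] [Field Ω] [Algebra F Ω]
    (m : ℕ) (hm : 0 < m) (t : Finset Ω)
    (h : ∀ x ∈ t, ∃ c : F, x ^ m = algebraMap F Ω c) :
    FiniteDimensional F (adjoin F (t : Set Ω)) ∧
    Module.finrank F (adjoin F (t : Set Ω)) ≤ m ^ t.card := by
  classical
  induction t using Finset.induction with
  | empty =>
    rw [Finset.coe_empty, IntermediateField.adjoin_empty]
    exact ⟨inferInstance, by simp⟩
  | @insert x s hx ih =>
    obtain ⟨ihf, ihr⟩ := ih (fun y hy => h y (Finset.mem_insert_of_mem hy))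
    obtain ⟨c, hc⟩ := h x (Finset.mem_insert_self x s)
    set E := adjoin F (s : Set Ω) with hE
    have hint : IsIntegral E x := by
      refine ⟨X ^ m - C (algebraMap F E c), monic_X_pow_sub_C _ (by omega), ?_⟩
      rw [eval₂_sub, eval₂_pow, eval₂_X, eval₂_C, hc, ← IsScalarTower.algebraMap_apply, sub_self]
    have hfin : FiniteDimensional E E⟮x⟯ := adjoin.finiteDimensional hint
    have hdeg : Module.finrank E E⟮x⟯ ≤ m := by
      rw [adjoin.finrank hint]
      have hdvd := minpoly.dvd E x (p := X ^ m - C (algebraMap F E c)) (by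
        rw [map_sub, map_pow, aeval_X, aeval_C, hc, ← IsScalarTower.algebraMap_apply, sub_self])
      have := natDegree_le_of_dvd hdvd (monic_X_pow_sub_C _ (by omega)).ne_zero
      rwa [natDegree_X_pow_sub_C] at this
    have heq : adjoin F (insert x s : Finset Ω) =
        (adjoin E ({x} : Set Ω)).restrictScalars F := by
      rw [Finset.coe_insert, Set.insert_eq, Set.union_comm, ← adjoin_adjoin_left]
    haveI : FiniteDimensional F E := ihf
    have hfinF : FiniteDimensional F ((adjoin E ({x} : Set Ω)).restrictScalars F) := by
      have : FiniteDimensional F (adjoin E ({x} : Set Ω)) :=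
        FiniteDimensional.trans F E (adjoin E ({x} : Set Ω))
      exact this
    haveI : Module.Free E E⟮x⟯ := Module.Free.of_divisionRing E E⟮x⟯
    have hr : Module.finrank F ((adjoin E ({x} : Set Ω)).restrictScalars F)
        = Module.finrank F E * Module.finrank E E⟮x⟯ :=
      (Module.finrank_mul_finrank F E E⟮x⟯).symm
    constructor
    · rw [heq]; exact hfinF
    · rw [heq, hr, Finset.card_insert_of_notMem hx, pow_succ]
      exact Nat.mul_le_mul ihr hdeg

theorem aux_pow_mem {F Ω : Type*} [Field F] [Field Ω] [Algebra F Ω] (p n : ℕ)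
    [ExpChar Ω p] (hpn : p ^ n ≠ 0) (S : Set Ω)
    (hS : ∀ x ∈ S, ∃ c : F, algebraMap F Ω c = x ^ p ^ n) :
    ∀ x ∈ adjoin F S, ∃ c : F, algebraMap F Ω c = x ^ p ^ n := by
  let M : IntermediateField F Ω :=
    { carrier := {y | ∃ c : F, algebraMap F Ω c = y ^ p ^ n}
      mul_mem' := by rintro a b ⟨c, hc⟩ ⟨d, hd⟩; exact ⟨c * d, by rw [map_mul, hc, hd, mul_pow]⟩
      one_mem' := ⟨1, by simp⟩
      add_mem' := by
        rintro a b ⟨c, hc⟩ ⟨d, hd⟩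
        exact ⟨c + d, by rw [map_add, hc, hd, add_pow_expChar_pow]⟩
      zero_mem' := ⟨0, by simp [zero_pow hpn]⟩
      inv_mem' := by rintro a ⟨c, hc⟩; exact ⟨c⁻¹, by rw [map_inv₀, hc, inv_pow]⟩
      algebraMap_mem' := fun c => ⟨c ^ p ^ n, by rw [map_pow]⟩ }
  intro x hx
  have hle : adjoin F S ≤ M := adjoin_le_iff.mpr (fun y hy => hS y hy)
  exact hle hx

/-- **Lemma (after Albert).** Let `p` be a prime, `F` a field of characteristic `p`, `K/F` an
algebraic field extension, `α ∈ K` nonzero, and let `r` be minimal such that `α^(p^r)` is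
separable over `F`.  Then there is a purely inseparable extension `L/F` (realized inside an
algebraic closure of `K`) with `L^(p^(r+1)) ⊆ F` and `[L:F] ≤ p^([F(α^(p^r)):F]·(r+1))`,
such that `α` is a `p`-th power in `L(α)`. -/
theorem exists_purely_inseparable_extension_pth_power
    (p : ℕ) (hp : p.Prime) (F K : Type u) [Field F] [Field K] [Algebra F K]
    [Algebra.IsAlgebraic F K] [CharP F p]
    (α : K) (hα : α ≠ 0) (r : ℕ)
    (hsep : IsSeparable F (α ^ p ^ r))
    (hmin : ∀ s : ℕ, IsSeparable F (α ^ p ^ s) → r ≤ s) :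
    ∃ L : IntermediateField F (AlgebraicClosure K),
      IsPurelyInseparable F L ∧
      (∀ x : L, (x : AlgebraicClosure K) ^ p ^ (r + 1) ∈
        (algebraMap F (AlgebraicClosure K)).range) ∧
      Module.finrank F L ≤ p ^ (Module.finrank F (F⟮α ^ p ^ r⟯) * (r + 1)) ∧
      ∃ β ∈ L ⊔ F⟮algebraMap K (AlgebraicClosure K) α⟯,
        β ^ p = algebraMap K (AlgebraicClosure K) α := by
  classical
  haveI : Fact p.Prime := ⟨hp⟩
  haveI : ExpChar F p := ExpChar.prime hp
  set Ω := AlgebraicClosure K with hΩ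
  haveI hΩchar : CharP Ω p := charP_of_injective_algebraMap (algebraMap F Ω).injective p
  haveI : ExpChar Ω p := ExpChar.prime hp
  set a : K := α ^ p ^ r with ha
  have ha_int : IsIntegral F a := hsep.isIntegral
  set f : Polynomial F := minpoly F a with hf
  set d : ℕ := f.natDegree with hd
  have hd0 : 0 < d := minpoly.natDegree_pos ha_int
  have hfrk : Module.finrank F F⟮a⟯ = d := adjoin.finrank ha_int
  set fΩ : Polynomial Ω := f.map (algebraMap F Ω) with hfΩ
  set ψ : Ω ≃+* Ω := (iterateFrobeniusEquiv Ω p (r + 1)).symm with hψdef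
  have hψ : ∀ y : Ω, (ψ y) ^ p ^ (r + 1) = y := fun y => by
    have := (iterateFrobeniusEquiv Ω p (r + 1)).apply_symm_apply y
    rwa [iterateFrobeniusEquiv_def] at this
  set h : Polynomial Ω := fΩ.map (ψ : Ω →+* Ω) with hh
  have hfΩmonic : fΩ.Monic := (minpoly.monic ha_int).map _
  have hhmonic : h.Monic := hfΩmonic.map _
  have hfΩdeg : fΩ.natDegree = d := natDegree_map _
  have hhdeg : h.natDegree = d := by rw [hh, natDegree_map, hfΩdeg]
  have hhsep : h.Separable := (Polynomial.Separable.map (show f.Separable from hsep)).map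
  set a' : Ω := algebraMap K Ω a with ha'
  set α' : Ω := algebraMap K Ω α with hα'
  set β : Ω := ψ a' with hβ
  have hβp : β ^ p = α' := by
    apply (iterateFrobeniusEquiv Ω p r).injective
    rw [iterateFrobeniusEquiv_def, iterateFrobeniusEquiv_def, ← pow_mul, ← pow_succ',
      hψ a', ha', ha, map_pow]
  have hcoe : ∀ y : Ω, (ψ : Ω →+* Ω) y = ψ y := fun _ => rfl
  have hβroot : h.eval β = 0 := by
    rw [hh, eval_map, hβ, ← hcoe, eval₂_hom]
    have : fΩ.eval a' = 0 := by
      rw [hfΩ, eval_map, ← aeval_def, ha', aeval_algebraMap_apply Ω a,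
        minpoly.aeval, map_zero]
    rw [this, map_zero]
  -- coefficients
  have hcoeffpow : ∀ i : ℕ, (h.coeff i) ^ p ^ (r + 1) = algebraMap F Ω (f.coeff i) := by
    intro i
    rw [hh, coeff_map, hcoe, hψ, hfΩ, coeff_map]
  set t : Finset Ω := (Finset.range d).image h.coeff with ht
  set L : IntermediateField F Ω := adjoin F (t : Set Ω) with hL
  have htpow : ∀ x ∈ t, ∃ c : F, algebraMap F Ω c = x ^ p ^ (r + 1) := by
    intro x hx
    obtain ⟨i, _, rfl⟩ := Finset.mem_image.mp hx
    exact ⟨f.coeff i, (hcoeffpow i).symm⟩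
  have hLpow : ∀ x ∈ L, ∃ c : F, algebraMap F Ω c = x ^ p ^ (r + 1) :=
    aux_pow_mem p (r + 1) (pow_ne_zero _ hp.ne_zero) _ htpow
  refine ⟨L, ?_, ?_, ?_, ?_⟩
  · -- purely inseparable
    rw [isPurelyInseparable_iff_pow_mem F p]
    intro x
    obtain ⟨c, hc⟩ := hLpow x x.2
    refine ⟨r + 1, ⟨c, ?_⟩⟩
    have : (algebraMap F L c : Ω) = ((x ^ p ^ (r + 1) : L) : Ω) := by
      push_cast
      rw [← hc]
    exact_mod_cast Subtype.ext this
  · intro x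
    obtain ⟨c, hc⟩ := hLpow x x.2
    exact ⟨c, hc⟩
  · -- finrank bound
    obtain ⟨_, hb⟩ := aux_finrank (p ^ (r + 1)) (pow_pos hp.pos _) t
      (fun x hx => by obtain ⟨c, hc⟩ := htpow x hx; exact ⟨c, hc.symm⟩)
    refine hb.trans ?_
    have hcard : t.card ≤ d := (Finset.card_image_le).trans (Finset.card_range d).le
    calc (p ^ (r + 1)) ^ t.card ≤ (p ^ (r + 1)) ^ d :=
          Nat.pow_le_pow_right (pow_pos hp.pos _) hcard
      _ = p ^ (Module.finrank F F⟮a⟯ * (r + 1)) := by rw [← pow_mul, hfrk, mul_comm]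
  · -- β is a p-th power statement
    set E : IntermediateField F Ω := L ⊔ F⟮α'⟯ with hEdef
    haveI : CharP E p := charP_of_injective_algebraMap (algebraMap F E).injective p
    haveI : ExpChar E p := ExpChar.prime hp
    have hα'E : α' ∈ E := SetLike.le_def.mp le_sup_right (mem_adjoin_simple_self F α')
    have hcoeffE : ∀ n : ℕ, h.coeff n ∈ E := by
      intro n
      rcases lt_trichotomy n d with hn | hn | hn
      · exact SetLike.le_def.mp le_sup_left (subset_adjoin F _
          (Finset.mem_coe.mpr (Finset.mem_image.mpr ⟨n, Finset.mem_range.mpr hn, rfl⟩)))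
      · have h1 : h.coeff n = 1 := by rw [hn, ← hhdeg]; exact hhmonic.coeff_natDegree
        rw [h1]; exact one_mem E
      · rw [coeff_eq_zero_of_natDegree_lt (hhdeg ▸ hn)]; exact zero_mem E
    have hlift : h ∈ lifts (algebraMap E Ω) := by
      rw [lifts_iff_coeff_lifts]
      exact fun n => ⟨⟨h.coeff n, hcoeffE n⟩, rfl⟩
    obtain ⟨H, hH⟩ := (mem_lifts _).mp hlift
    have hHsep : H.Separable := (separable_map (algebraMap E Ω)).mp (by rw [hH]; exact hhsep)
    have hHeval : aeval β H = 0 := by rw [aeval_def, ← eval_map, hH, hβroot]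
    have hminsep : (minpoly E β).Separable := hHsep.of_dvd (minpoly.dvd E β hHeval)
    have h1 : (minpoly E β).natSepDegree = 1 := by
      rw [minpoly.natSepDegree_eq_one_iff_pow_mem p]
      refine ⟨1, ⟨⟨α', hα'E⟩, ?_⟩⟩
      rw [pow_one, hβp]; rfl
    rw [natSepDegree_eq_natDegree_of_separable _ hminsep] at h1
    obtain ⟨y, hy⟩ := minpoly.natDegree_eq_one_iff.mp h1
    exact ⟨β, by rw [← hy]; exact y.2, hβp⟩
end

section
/- Let K/F be a finite field extension, let α ∈ K be nonzero, and let g ∈ F[X] be a polynomial with deg(g) ≤ 2 and g(α) ≠ 0. Consider the 3-dimensional diagonal quadratic form φ = ⟨1, α, g(α)⟩ over K (i.e. (x,y,z) ↦ x² + αy² + g(α)z²). Then there exists a generalized 2-extension F′/F with [F′:F] ≤ 2³ such that φ becomes isotropic over the compositum KF′ (more precisely, over the ring K ⊗_F F′, the base change of φ has a nonzero zero; when K and F′ are linearly disjoint over F this is the field compositum). -/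
universe u

open scoped TensorProduct

/-- A finite field extension `K/F` is a *generalized 2-extension* if it admits a tower of
intermediate fields `F = K₀ ⊆ K₁ ⊆ … ⊆ K_m = K` in which each step is a quadratic
field extension. -/
def IsGeneralized2Extension (F : Type*) (K : Type*) [Field F] [Field K] [Algebra F K] :
    Prop :=
  FiniteDimensional F K ∧
    ∃ (m : ℕ) (T : Fin (m + 1) → IntermediateField F K),
      T 0 = ⊥ ∧ T (Fin.last m) = ⊤ ∧
        ∀ i : Fin m, T i.castSucc ≤ T i.succ ∧
          Module.finrank F (T i.succ) = 2 * Module.finrank F (T i.castSucc)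

namespace QuadraticSlotAux

open IntermediateField Module Polynomial

variable {F E : Type*} [Field F] [Field E] [Algebra F E]

/-- Towers of quadratic steps reaching `L`. -/
def Reach (F : Type*) {E : Type*} [Field F] [Field E] [Algebra F E]
    (L : IntermediateField F E) : Prop :=
  ∃ (m : ℕ) (T : Fin (m + 1) → IntermediateField F E),
    T 0 = ⊥ ∧ T (Fin.last m) = L ∧
      ∀ i : Fin m, T i.castSucc ≤ T i.succ ∧
        Module.finrank F (T i.succ) = 2 * Module.finrank F (T i.castSucc)

lemma reach_bot : Reach F (⊥ : IntermediateField F E) :=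
  ⟨0, fun _ => ⊥, rfl, rfl, fun i => i.elim0⟩

lemma reach_step {L : IntermediateField F E} (hfin : FiniteDimensional F ↥L)
    (hL : Reach F L) (x : E) (hx : x ^ 2 ∈ L) :
    Reach F (L ⊔ F⟮x⟯) ∧ FiniteDimensional F ↥(L ⊔ F⟮x⟯) ∧
      finrank F ↥(L ⊔ F⟮x⟯) ≤ 2 * finrank F ↥L := by
  by_cases hxL : x ∈ L
  · have h : L ⊔ F⟮x⟯ = L := by rw [sup_eq_left]; exact adjoin_simple_le_iff.mpr hxL
    rw [h]
    exact ⟨hL, hfin, Nat.le_mul_of_pos_left _ (by norm_num)⟩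
  · set p : Polynomial ↥L := X ^ 2 - C ⟨x ^ 2, hx⟩ with hp
    have hmonic : p.Monic := by
      apply Polynomial.monic_X_pow_sub_C
      norm_num
    have hroot : Polynomial.aeval x p = 0 := by
      simp [hp]
    have hint : IsIntegral ↥L x := ⟨p, hmonic, hroot⟩
    have hdeg : (minpoly ↥L x).natDegree = 2 := by
      have hle : (minpoly ↥L x).natDegree ≤ 2 := by
        have := Polynomial.natDegree_le_natDegree (minpoly.min ↥L x hmonic hroot)
        rwa [hp, natDegree_X_pow_sub_C] at this
      have hpos : 0 < (minpoly ↥L x).natDegree := minpoly.natDegree_pos hint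
      have hne1 : (minpoly ↥L x).natDegree ≠ 1 := by
        intro h1
        have : (minpoly ↥L x).degree = 1 := by
          rw [Polynomial.degree_eq_natDegree (minpoly.ne_zero hint), h1]; rfl
        obtain ⟨l, hl⟩ := minpoly.degree_eq_one_iff.mp this
        exact hxL (hl ▸ l.2)
      omega
    have hfd2 : FiniteDimensional ↥L ↥(adjoin ↥L {x}) :=
      IntermediateField.adjoin.finiteDimensional hint
    have hfr2 : finrank ↥L ↥(adjoin ↥L {x}) = 2 := by
      rw [IntermediateField.adjoin.finrank hint, hdeg]
    have hkey : (adjoin ↥L {x}).restrictScalars F = L ⊔ F⟮x⟯ :=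
      restrictScalars_adjoin_eq_sup (F := F) L {x}
    have hfdF : FiniteDimensional F ↥(L ⊔ F⟮x⟯) := by
      rw [← hkey]
      show FiniteDimensional F ↥(adjoin ↥L {x})
      exact FiniteDimensional.trans F ↥L ↥(adjoin ↥L {x})
    have hfrF : finrank F ↥(L ⊔ F⟮x⟯) = 2 * finrank F ↥L := by
      rw [← hkey]
      show finrank F ↥(adjoin ↥L {x}) = 2 * finrank F ↥L
      haveI : Module.Free ↥L ↥(adjoin ↥L {x}) := Module.Free.of_divisionRing _ _
      rw [← Module.finrank_mul_finrank F ↥L ↥(adjoin ↥L {x}), hfr2, mul_comm]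
    obtain ⟨m, T, hT0, hTl, hTs⟩ := hL
    refine ⟨⟨m + 1, Fin.snoc T (L ⊔ F⟮x⟯), ?_, ?_, ?_⟩, hfdF, le_of_eq hfrF⟩
    · rw [show (0 : Fin (m + 2)) = Fin.castSucc 0 from rfl, Fin.snoc_castSucc, hT0]
    · simp
    · intro i
      refine Fin.lastCases ?_ ?_ i
      · rw [Fin.succ_last, Fin.snoc_last, Fin.snoc_castSucc, hTl]
        exact ⟨le_sup_left, hfrF ▸ rfl⟩
      · intro j
        rw [Fin.succ_castSucc, Fin.snoc_castSucc, Fin.snoc_castSucc]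
        exact hTs j

lemma gen2_of_three (a b y : E)
    (htop : adjoin F ({a, b, y} : Set E) = ⊤)
    (ha : a ^ 2 ∈ (⊥ : IntermediateField F E))
    (hb : b ^ 2 ∈ (⊥ : IntermediateField F E) ⊔ F⟮a⟯)
    (hy : y ^ 2 ∈ ((⊥ : IntermediateField F E) ⊔ F⟮a⟯) ⊔ F⟮b⟯) :
    IsGeneralized2Extension F E ∧ finrank F E ≤ 2 ^ 3 := by
  have h0 : FiniteDimensional F ↥(⊥ : IntermediateField F E) :=
    (IntermediateField.botEquiv F E).symm.toLinearEquiv.finiteDimensional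
  obtain ⟨r1, f1, d1⟩ := reach_step h0 reach_bot a ha
  obtain ⟨r2, f2, d2⟩ := reach_step f1 r1 b hb
  obtain ⟨r3, f3, d3⟩ := reach_step f2 r2 y hy
  have hsup : (((⊥ : IntermediateField F E) ⊔ F⟮a⟯) ⊔ F⟮b⟯) ⊔ F⟮y⟯ = ⊤ := by
    rw [bot_sup_eq, ← adjoin_union, ← adjoin_union, ← htop]
    congr 1
    ext x
    simp only [Set.insert_union, Set.singleton_union, Set.mem_insert_iff,
      Set.mem_singleton_iff]
  rw [hsup] at r3 f3 d3
  have hb1 : finrank F ↥(⊥ : IntermediateField F E) = 1 := IntermediateField.finrank_bot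
  have hfinE : FiniteDimensional F E :=
    (IntermediateField.topEquiv (F := F) (E := E)).toLinearEquiv.finiteDimensional
  have hrE : finrank F E ≤ 2 ^ 3 := by
    have := IntermediateField.finrank_top' (F := F) (E := E)
    omega
  exact ⟨⟨hfinE, r3⟩, hrE⟩

lemma tensor_part (F K F' : Type*) [Field F] [Field K] [Field F'] [Algebra F K]
    [Algebra F F'] (α : K) (g : Polynomial F) (hg : g.natDegree ≤ 2)
    (a b y : F') (ha : a ^ 2 = algebraMap F F' (-(g.coeff 2)))
    (hb : b ^ 2 = algebraMap F F' (-(g.coeff 0)))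
    (hy : y ^ 2 = algebraMap F F' (-(g.coeff 1)) - (a * b + a * b)) :
    ∃ x y z : K ⊗[F] F',
      ¬(x = 0 ∧ y = 0 ∧ z = 0) ∧
      x ^ 2 + algebraMap K (K ⊗[F] F') α * y ^ 2 +
        algebraMap K (K ⊗[F] F') (Polynomial.aeval α g) * z ^ 2 = 0 := by
  haveI : Nontrivial (K ⊗[F] F') := Module.FaithfullyFlat.lTensor_nontrivial F K F'
  set ι : F' →ₐ[F] K ⊗[F] F' := Algebra.TensorProduct.includeRight with hι
  set κ : K →+* K ⊗[F] F' := algebraMap K (K ⊗[F] F') with hκ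
  refine ⟨κ α * ι a + ι b, ι y, 1, ?_, ?_⟩
  · rintro ⟨-, -, h1⟩
    exact one_ne_zero h1
  · have hA : (ι a) ^ 2 = - algebraMap F (K ⊗[F] F') (g.coeff 2) := by
      rw [← map_pow, ha, AlgHom.commutes, map_neg]
    have hB : (ι b) ^ 2 = - algebraMap F (K ⊗[F] F') (g.coeff 0) := by
      rw [← map_pow, hb, AlgHom.commutes, map_neg]
    have hY : (ι y) ^ 2 = - algebraMap F (K ⊗[F] F') (g.coeff 1)
        - (ι a * ι b + ι a * ι b) := by
      rw [← map_pow, hy, map_sub, map_add, map_mul, AlgHom.commutes, map_neg]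
    have hgexp : Polynomial.aeval α g =
        algebraMap F K (g.coeff 0) + algebraMap F K (g.coeff 1) * α
          + algebraMap F K (g.coeff 2) * α ^ 2 := by
      rw [Polynomial.aeval_eq_sum_range' (Nat.lt_succ_of_le hg)]
      simp [Finset.sum_range_succ, Algebra.smul_def]
    have hcomm : ∀ c : F, κ (algebraMap F K c) = algebraMap F (K ⊗[F] F') c := fun c =>
      (IsScalarTower.algebraMap_apply F K (K ⊗[F] F') c).symm
    rw [hgexp, map_add, map_add, map_mul, map_mul, map_pow, hcomm, hcomm, hcomm]
    linear_combination (κ α) ^ 2 * hA + hB + (κ α) * hY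

end QuadraticSlotAux

open IntermediateField Module Polynomial in
set_option maxHeartbeats 1000000 in
set_option synthInstance.maxHeartbeats 400000 in
/-- **Lemma.** Let `K/F` be a finite field extension, `α ∈ K` nonzero, and `g ∈ F[X]` a
polynomial of degree at most `2` with `g(α) ≠ 0`.  Then there is a generalized 2-extension
`F′/F` with `[F′:F] ≤ 2³` such that the diagonal quadratic form `⟨1, α, g(α)⟩` becomes
isotropic over `K ⊗_F F′`. -/
theorem quadratic_slot_lemma
    (F K : Type u) [Field F] [Field K] [Algebra F K] [FiniteDimensional F K]
    (α : K) (hα : α ≠ 0) (g : Polynomial F) (hg : g.natDegree ≤ 2)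
    (hgα : Polynomial.aeval α g ≠ 0) :
    ∃ (F' : Type u) (_ : Field F') (_ : Algebra F F'),
      IsGeneralized2Extension F F' ∧ Module.finrank F F' ≤ 2 ^ 3 ∧
        ∃ x y z : K ⊗[F] F',
          ¬(x = 0 ∧ y = 0 ∧ z = 0) ∧
          x ^ 2 + algebraMap K (K ⊗[F] F') α * y ^ 2 +
            algebraMap K (K ⊗[F] F') (Polynomial.aeval α g) * z ^ 2 = 0 := by
  classical
  set Ω := AlgebraicClosure F with hΩ
  obtain ⟨a, ha⟩ := IsAlgClosed.exists_pow_nat_eq (k := Ω)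
    (algebraMap F Ω (-(g.coeff 2))) (n := 2) (by norm_num)
  obtain ⟨b, hb⟩ := IsAlgClosed.exists_pow_nat_eq (k := Ω)
    (algebraMap F Ω (-(g.coeff 0))) (n := 2) (by norm_num)
  obtain ⟨y, hy⟩ := IsAlgClosed.exists_pow_nat_eq (k := Ω)
    (algebraMap F Ω (-(g.coeff 1)) - (a * b + a * b)) (n := 2) (by norm_num)
  set M : IntermediateField F Ω := IntermediateField.adjoin F {a, b, y} with hM
  have haM : a ∈ M := subset_adjoin F _ (by simp)
  have hbM : b ∈ M := subset_adjoin F _ (by simp)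
  have hyM : y ∈ M := subset_adjoin F _ (by simp)
  set a' : ↥M := ⟨a, haM⟩
  set b' : ↥M := ⟨b, hbM⟩
  set y' : ↥M := ⟨y, hyM⟩
  have htop : adjoin F ({a', b', y'} : Set ↥M) = ⊤ := by
    apply IntermediateField.lift_injective M
    rw [lift_adjoin, lift_top]
    congr 1
    simp [Set.image_insert_eq]
    rfl
  have hsa : a' ^ 2 = algebraMap F ↥M (-(g.coeff 2)) :=
    Subtype.ext (by push_cast; simpa using ha)
  have hsb : b' ^ 2 = algebraMap F ↥M (-(g.coeff 0)) :=
    Subtype.ext (by push_cast; simpa using hb)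
  have hsy : y' ^ 2 = algebraMap F ↥M (-(g.coeff 1)) - (a' * b' + a' * b') :=
    Subtype.ext (by push_cast; simpa using hy)
  have ha' : a' ^ 2 ∈ (⊥ : IntermediateField F ↥M) := by
    rw [hsa]; exact IntermediateField.algebraMap_mem _ _
  have hb' : b' ^ 2 ∈ (⊥ : IntermediateField F ↥M) ⊔ F⟮a'⟯ := by
    rw [hsb]; exact IntermediateField.algebraMap_mem _ _
  have hy' : y' ^ 2 ∈ ((⊥ : IntermediateField F ↥M) ⊔ F⟮a'⟯) ⊔ F⟮b'⟯ := by
    rw [hsy]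
    have hma : a' ∈ ((⊥ : IntermediateField F ↥M) ⊔ F⟮a'⟯) ⊔ F⟮b'⟯ :=
      (le_sup_left : (⊥ : IntermediateField F ↥M) ⊔ F⟮a'⟯ ≤ _)
        ((le_sup_right : F⟮a'⟯ ≤ _) (mem_adjoin_simple_self F a'))
    have hmb : b' ∈ ((⊥ : IntermediateField F ↥M) ⊔ F⟮a'⟯) ⊔ F⟮b'⟯ :=
      (le_sup_right : F⟮b'⟯ ≤ _) (mem_adjoin_simple_self F b')
    exact sub_mem (IntermediateField.algebraMap_mem _ _)
      (add_mem (mul_mem hma hmb) (mul_mem hma hmb))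
  obtain ⟨hgen, hrank⟩ := QuadraticSlotAux.gen2_of_three a' b' y' htop ha' hb' hy'
  exact ⟨↥M, inferInstance, inferInstance, hgen, hrank,
    QuadraticSlotAux.tensor_part F K ↥M α g hg a' b' y' hsa hsb hsy⟩
end
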